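/- arXiv:1205.1952 — 3 statements merged into one kernel-verified Lean document; each statement's English description precedes it below -/
import Mathlib

section
/- Let ζ be a primitive (2k+1)-th root of unity in a field K (or in ℂ), and let y be a nonzero element of K with s = y + y⁻¹. Then (−1)^k + Σ_{i=1}^{k} (−1)^{k−i}(y^i + y^{-i}) = Π_{i=1}^{k} (s + ζ^i + ζ^{-i}). -/
open Finset Polynomial in
private lemma aux_poly_prod {K : Type*} [Field K] (k : ℕ)
    (ζ : K) (hζ : IsPrimitiveRoot ζ (2 * k + 1)) (y : K) :
    ∏ j ∈ range (2 * k), (y + ζ ^ (j + 1)) =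
      ∑ j ∈ range (2 * k + 1), (-1 : K) ^ j * y ^ j := by
  have h2k : 0 < 2 * k + 1 := by omega
  have hpoly : ∏ j ∈ range (2 * k), ((X : K[X]) - C (ζ ^ (j + 1))) =
      ∑ j ∈ range (2 * k + 1), (X : K[X]) ^ j := by
    have h1 : (X : K[X]) ^ (2 * k + 1) - C 1 =
        ∏ i ∈ range (2 * k + 1), (X - C (ζ ^ i * 1)) :=
      X_pow_sub_C_eq_prod hζ h2k (one_pow _)
    have hX1 : ((X : K[X]) - 1) ≠ 0 := by
      have := X_sub_C_ne_zero (1 : K)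
      simpa using this
    apply mul_right_cancel₀ hX1
    rw [geom_sum_mul]
    have h2 : ∏ i ∈ range (2 * k + 1), ((X : K[X]) - C (ζ ^ i)) =
        (∏ j ∈ range (2 * k), ((X : K[X]) - C (ζ ^ (j + 1)))) * (X - C (ζ ^ 0)) :=
      prod_range_succ' _ _
    simp only [mul_one] at h1
    rw [show ((1 : K[X])) = C 1 by rw [C_1], h1, h2]
    simp
  have heval := congrArg (Polynomial.eval (-y)) hpoly
  simp only [eval_prod, eval_sub, eval_X, eval_C, eval_finset_sum, eval_pow] at heval
  have hfac : ∀ j, (-y - ζ ^ (j + 1)) = -1 * (y + ζ ^ (j + 1)) := by intro j; ring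
  rw [Finset.prod_congr rfl fun j _ => hfac j, Finset.prod_mul_distrib,
    Finset.prod_const] at heval
  rw [Finset.card_range] at heval
  have hsign : ((-1 : K)) ^ (2 * k) = 1 := by
    rw [pow_mul]; simp
  rw [hsign, one_mul] at heval
  rw [heval]
  refine Finset.sum_congr rfl fun j _ => ?_
  rw [neg_pow]

open Finset in
theorem sum_eq_prod_root_of_unity {K : Type*} [Field K] (k : ℕ) (hk : 1 ≤ k)
    (ζ : K) (hζ : IsPrimitiveRoot ζ (2 * k + 1)) (y : K) (hy : y ≠ 0) (s : K)
    (hs : s = y + y⁻¹) :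
    (-1 : K) ^ k + ∑ i ∈ Icc 1 k, (-1 : K) ^ (k - i) * (y ^ i + (y ^ i)⁻¹) =
      ∏ i ∈ Icc 1 k, (s + ζ ^ i + (ζ ^ i)⁻¹) := by
  have hζ0 : ζ ≠ 0 := hζ.ne_zero (by omega)
  have hζ1 : ζ ^ (2 * k + 1) = 1 := hζ.pow_eq_one
  have hyk : (y : K) ^ k ≠ 0 := pow_ne_zero _ hy
  apply mul_left_cancel₀ hyk
  have key := aux_poly_prod k ζ hζ y
  -- Claim A : y^k * LHS = ∑ j ∈ range (2k+1), (-1)^j * y^j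
  have hA : y ^ k * ((-1 : K) ^ k + ∑ i ∈ Icc 1 k, (-1 : K) ^ (k - i) * (y ^ i + (y ^ i)⁻¹)) =
      ∑ j ∈ range (2 * k + 1), (-1 : K) ^ j * y ^ j := by
    have hterm : ∀ i ∈ Icc 1 k,
        y ^ k * ((-1 : K) ^ (k - i) * (y ^ i + (y ^ i)⁻¹)) =
          (-1 : K) ^ (k - i) * y ^ (k + i) + (-1 : K) ^ (k - i) * y ^ (k - i) := by
      intro i hi
      rw [Finset.mem_Icc] at hi
      have h1 : y ^ k = y ^ (k - i) * y ^ i := by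
        rw [← pow_add]; congr 1; omega
      have h2 : y ^ k * (y ^ i)⁻¹ = y ^ (k - i) := by
        rw [h1, mul_assoc, mul_inv_cancel₀ (pow_ne_zero _ hy), mul_one]
      have h3 : y ^ k * y ^ i = y ^ (k + i) := by rw [← pow_add]
      calc y ^ k * ((-1 : K) ^ (k - i) * (y ^ i + (y ^ i)⁻¹))
          = (-1 : K) ^ (k - i) * (y ^ k * y ^ i) +
              (-1 : K) ^ (k - i) * (y ^ k * (y ^ i)⁻¹) := by ring
        _ = _ := by rw [h3, h2]
    rw [mul_add, Finset.mul_sum, Finset.sum_congr rfl hterm, Finset.sum_add_distrib]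
    -- convert Icc sums to range sums
    have hIcc : Finset.Icc 1 k = Finset.Ico 1 (k + 1) := by rw [Finset.Ico_add_one_right_eq_Icc]
    have hup : ∑ i ∈ Icc 1 k, (-1 : K) ^ (k - i) * y ^ (k + i) =
        ∑ j ∈ range k, (-1 : K) ^ (k + 1 + j) * y ^ (k + 1 + j) := by
      rw [hIcc, Finset.sum_Ico_eq_sum_range]
      simp only [Nat.add_sub_cancel]
      refine Finset.sum_congr rfl fun j hj => ?_
      rw [Finset.mem_range] at hj
      have e1 : k + (1 + j) = k + 1 + j := by omega
      have e2 : (-1 : K) ^ (k + 1 + j) = (-1 : K) ^ (k - (1 + j)) := by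
        have : k + 1 + j = (k - (1 + j)) + 2 * (j + 1) := by omega
        rw [this, pow_add, pow_mul]
        simp
      rw [e1, e2]
    have hdown : ∑ i ∈ Icc 1 k, (-1 : K) ^ (k - i) * y ^ (k - i) =
        ∑ j ∈ range k, (-1 : K) ^ j * y ^ j := by
      rw [hIcc, Finset.sum_Ico_eq_sum_range]
      simp only [Nat.add_sub_cancel]
      rw [← Finset.sum_range_reflect]
      refine Finset.sum_congr rfl fun j hj => ?_
      rw [Finset.mem_range] at hj
      congr 2 <;> omega
    rw [hup, hdown]
    have hsplit : ∑ j ∈ range (2 * k + 1), (-1 : K) ^ j * y ^ j =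
        (∑ j ∈ range (k + 1), (-1 : K) ^ j * y ^ j) +
          ∑ j ∈ range k, (-1 : K) ^ (k + 1 + j) * y ^ (k + 1 + j) := by
      have : 2 * k + 1 = (k + 1) + k := by omega
      rw [this, Finset.sum_range_add]
    rw [hsplit, Finset.sum_range_succ]
    ring
  -- Claim B : y^k * RHS = ∏ j ∈ range (2k), (y + ζ^(j+1))
  have hB : y ^ k * ∏ i ∈ Icc 1 k, (s + ζ ^ i + (ζ ^ i)⁻¹) =
      ∏ j ∈ range (2 * k), (y + ζ ^ (j + 1)) := by
    have hcard : (Finset.Icc 1 k).card = k := by simp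
    have hyprod : y ^ k = ∏ _i ∈ Icc 1 k, y := by rw [Finset.prod_const, hcard]
    rw [hyprod, ← Finset.prod_mul_distrib]
    have hfac : ∀ i ∈ Icc 1 k, y * (s + ζ ^ i + (ζ ^ i)⁻¹) =
        (y + ζ ^ i) * (y + ζ ^ (2 * k + 1 - i)) := by
      intro i hi
      rw [Finset.mem_Icc] at hi
      have hzi : ζ ^ i * ζ ^ (2 * k + 1 - i) = 1 := by
        rw [← pow_add]
        have : i + (2 * k + 1 - i) = 2 * k + 1 := by omega
        rw [this, hζ1]
      have hinv : (ζ ^ i)⁻¹ = ζ ^ (2 * k + 1 - i) :=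
        eq_inv_of_mul_eq_one_left (by rw [mul_comm]; exact hzi) |>.symm
      rw [hs, hinv]
      have hyinv : y * y⁻¹ = 1 := mul_inv_cancel₀ hy
      calc y * (y + y⁻¹ + ζ ^ i + ζ ^ (2 * k + 1 - i))
          = y * y⁻¹ + (y ^ 2 + y * ζ ^ i + y * ζ ^ (2 * k + 1 - i)) := by ring
        _ = ζ ^ i * ζ ^ (2 * k + 1 - i) +
              (y ^ 2 + y * ζ ^ i + y * ζ ^ (2 * k + 1 - i)) := by rw [hyinv, hzi]
        _ = (y + ζ ^ i) * (y + ζ ^ (2 * k + 1 - i)) := by ring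
    rw [Finset.prod_congr rfl hfac, Finset.prod_mul_distrib]
    have hIcc : Finset.Icc 1 k = Finset.Ico 1 (k + 1) := by rw [Finset.Ico_add_one_right_eq_Icc]
    have hp1 : ∏ i ∈ Icc 1 k, (y + ζ ^ i) = ∏ j ∈ range k, (y + ζ ^ (j + 1)) := by
      rw [hIcc, Finset.prod_Ico_eq_prod_range]
      simp only [Nat.add_sub_cancel]
      exact Finset.prod_congr rfl fun j _ => by rw [Nat.add_comm 1 j]
    have hp2 : ∏ i ∈ Icc 1 k, (y + ζ ^ (2 * k + 1 - i)) =
        ∏ j ∈ range k, (y + ζ ^ (k + (j + 1))) := by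
      rw [hIcc, Finset.prod_Ico_eq_prod_range]
      simp only [Nat.add_sub_cancel]
      rw [← Finset.prod_range_reflect]
      refine Finset.prod_congr rfl fun j hj => ?_
      rw [Finset.mem_range] at hj
      congr 2
      omega
    rw [hp1, hp2]
    have : 2 * k = k + k := by omega
    rw [this, Finset.prod_range_add]
    congr 1
  rw [hA, hB, key]
end

section
/- Let x, y ∈ SL₂(K) for a field K and let c = [x⁻², y⁻¹] = x⁻²y⁻¹x²y be the commutator. Then Tr(c) = s⁴ − s³tu + s²t² + s²u² − 4s² + 2, where s = Tr(x), t = Tr(y), u = Tr(xy). -/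
set_option maxHeartbeats 2000000


theorem trace_commutator {K : Type*} [Field K]
    (x y : Matrix.SpecialLinearGroup (Fin 2) K)
    (s t u : K) (hs : s = (x : Matrix (Fin 2) (Fin 2) K).trace)
    (ht : t = (y : Matrix (Fin 2) (Fin 2) K).trace)
    (hu : u = ((x * y : Matrix.SpecialLinearGroup (Fin 2) K) : Matrix (Fin 2) (Fin 2) K).trace) :
    ((x⁻¹ ^ 2 * y⁻¹ * x ^ 2 * y : Matrix.SpecialLinearGroup (Fin 2) K) :
        Matrix (Fin 2) (Fin 2) K).trace =
      s ^ 4 - s ^ 3 * t * u + s ^ 2 * t ^ 2 + s ^ 2 * u ^ 2 - 4 * s ^ 2 + 2 := by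
  set a := (x : Matrix (Fin 2) (Fin 2) K) 0 0 with ha
  set b := (x : Matrix (Fin 2) (Fin 2) K) 0 1 with hb
  set c := (x : Matrix (Fin 2) (Fin 2) K) 1 0 with hc
  set d := (x : Matrix (Fin 2) (Fin 2) K) 1 1 with hd
  set e := (y : Matrix (Fin 2) (Fin 2) K) 0 0 with he
  set f := (y : Matrix (Fin 2) (Fin 2) K) 0 1 with hf
  set g := (y : Matrix (Fin 2) (Fin 2) K) 1 0 with hg
  set h := (y : Matrix (Fin 2) (Fin 2) K) 1 1 with hh
  have hdx : a * d - b * c = 1 := by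
    have := x.2; rwa [Matrix.det_fin_two] at this
  have hdy : e * h - f * g = 1 := by
    have := y.2; rwa [Matrix.det_fin_two] at this
  simp only [Matrix.SpecialLinearGroup.coe_mul, Matrix.SpecialLinearGroup.coe_pow,
    Matrix.SpecialLinearGroup.coe_inv, Matrix.adjugate_fin_two] at hu ⊢
  simp only [Matrix.trace_fin_two, Matrix.mul_apply, Fin.sum_univ_two, pow_two,
    Matrix.cons_val', Matrix.cons_val_zero, Matrix.cons_val_one, Matrix.head_cons,
    Matrix.head_fin_const, Matrix.empty_val', Matrix.cons_val_fin_one, Matrix.of_apply] at hu ⊢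
  subst hs ht hu
  simp only [Matrix.trace_fin_two]
  linear_combination (2 + -4*d^2 + d^2*h^2 + 2*d^2*e*h + d^2*e^2 + -2*b*c + -6*a*d +
      2*a*d*h^2 + 4*a*d*e*h + 2*a*d*e^2 + -4*a^2 + a^2*h^2 + 2*a^2*e*h + a^2*e^2) * hdx +
    (d^4 + 4*b*c*d^2 + 2*b^2*c^2 + 4*a*b*c*d + 4*a^2*b*c + a^4) * hdy
end

section
/- Let ℓ be an odd prime, ζ a primitive ℓ-th root of unity, and p ≠ ℓ a prime. If P is a prime ideal of ℤ[ζ + ζ⁻¹] above p with residue field 𝔽_{p^m} where m > 1, then for every 1 ≤ i ≤ (ℓ−1)/2, the image of ζⁱ + ζ⁻ⁱ in 𝔽_{p^m} generates 𝔽_{p^m} over 𝔽_p. -/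
open Polynomial

/-- The subring generated by the tautological generator of `Subring.closure {z}`. -/
lemma aux_closure_self_top {A : Type*} [Ring A] (z : A) :
    Subring.closure {(⟨z, Subring.subset_closure rfl⟩ : Subring.closure {z})} = ⊤ := by
  rw [eq_top_iff]
  rintro ⟨x, hx⟩ -
  refine Subring.closure_induction
    (p := fun y hy => (⟨y, hy⟩ : Subring.closure {z}) ∈
      Subring.closure {(⟨z, Subring.subset_closure rfl⟩ : Subring.closure {z})})
    ?_ ?_ ?_ ?_ ?_ ?_ hx
  · rintro y rfl
    exact Subring.subset_closure rfl
  · exact zero_mem _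
  · exact one_mem _
  · intro x y hx hy px py
    exact add_mem px py
  · intro x hx px
    exact neg_mem px
  · intro x y hx hy px py
    exact mul_mem px py


lemma aux_div (k i : ℕ) (ζ : ℂ) (hζ : IsPrimitiveRoot ζ (2 * k + 1))
    (hi1 : 1 ≤ i) (hik : i ≤ k)
    (a : (Subring.closure {ζ + ζ⁻¹} : Subring ℂ)) (ha : (a : ℂ) = ζ ^ i + (ζ ^ i)⁻¹) :
    ∃ q : Polynomial (Subring.closure {ζ + ζ⁻¹} : Subring ℂ),
      (X ^ (2 * k + 1) - 1 : Polynomial (Subring.closure {ζ + ζ⁻¹} : Subring ℂ)) =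
        (X ^ 2 - C a * X + 1) * q := by
  set g : Polynomial (Subring.closure {ζ + ζ⁻¹} : Subring ℂ) := X ^ 2 - C a * X + 1 with hg
  have hgm : g.Monic := by
    have h2 : (-(C a * X) + 1 : Polynomial (Subring.closure {ζ + ζ⁻¹} : Subring ℂ)).degree
        < 2 := by
      have hle : (-(C a * X) + 1 :
          Polynomial (Subring.closure {ζ + ζ⁻¹} : Subring ℂ)).degree ≤ 1 := by
        compute_degree
      refine lt_of_le_of_lt hle ?_
      exact_mod_cast (by norm_num : (1 : ℕ) < 2)
    have hmon := monic_X_pow_add h2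
    have : g = X ^ 2 + (-(C a * X) + 1) := by rw [hg]; ring
    rw [this]; exact hmon
  set f : Polynomial (Subring.closure {ζ + ζ⁻¹} : Subring ℂ) := X ^ (2 * k + 1) - 1 with hf
  have hdiv := (modByMonic_add_div f g).symm
  set r : Polynomial (Subring.closure {ζ + ζ⁻¹} : Subring ℂ) := f %ₘ g with hr
  have hdeg_g : g.degree = 2 := by rw [hg]; compute_degree!
  have hrdeg : r.natDegree ≤ 1 := by
    have := degree_modByMonic_lt f hgm
    rw [hdeg_g] at this
    exact natDegree_le_iff_degree_le.mpr (Order.le_of_lt_succ (by exact_mod_cast this))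
  set φ : (Subring.closure {ζ + ζ⁻¹} : Subring ℂ) →+* ℂ :=
    (Subring.closure {ζ + ζ⁻¹} : Subring ℂ).subtype with hφ
  have hφinj : Function.Injective φ := Subtype.coe_injective
  have hζ0 : ζ ≠ 0 := hζ.ne_zero (by omega)
  have hz0 : ζ ^ i ≠ 0 := pow_ne_zero _ hζ0
  have hzl : (ζ ^ i) ^ (2 * k + 1) = 1 := by
    rw [← pow_mul, mul_comm, pow_mul, hζ.pow_eq_one, one_pow]
  have hzne : ζ ^ i ≠ (ζ ^ i)⁻¹ := by
    intro h
    have h2 : ζ ^ (2 * i) = 1 := by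
      have := congrArg (· * ζ ^ i) h
      simp only [inv_mul_cancel₀ hz0] at this
      rw [two_mul, pow_add]; exact this
    have hdvd := hζ.dvd_of_pow_eq_one _ h2
    have := Nat.le_of_dvd (by omega) hdvd
    omega
  have hgroot : ∀ z : ℂ, z ≠ 0 → z + z⁻¹ = (ζ ^ i) + (ζ ^ i)⁻¹ →
      (g.map φ).eval z = 0 := by
    intro z hz hsum
    have hev : (g.map φ).eval z = z ^ 2 - (↑a : ℂ) * z + 1 := by
      rw [hg]
      simp [Polynomial.map_add, Polynomial.map_sub, Polynomial.map_pow, Polynomial.map_mul]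
      exact Or.inl rfl
    rw [hev, ha, ← hsum]
    field_simp
    ring
  have hfroot : ∀ z : ℂ, z ^ (2 * k + 1) = 1 → (f.map φ).eval z = 0 := by
    intro z hz
    have hev : (f.map φ).eval z = z ^ (2 * k + 1) - 1 := by rw [hf]; simp
    rw [hev, hz, sub_self]
  have hzinv_sum : (ζ ^ i)⁻¹ + ((ζ ^ i)⁻¹)⁻¹ = ζ ^ i + (ζ ^ i)⁻¹ := by
    rw [inv_inv]; ring
  have hzinv_l : ((ζ ^ i)⁻¹) ^ (2 * k + 1) = 1 := by rw [inv_pow, hzl, inv_one]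
  have hrmap : ∀ z : ℂ, z ≠ 0 → z + z⁻¹ = (ζ ^ i) + (ζ ^ i)⁻¹ → z ^ (2 * k + 1) = 1 →
      (r.map φ).eval z = 0 := by
    intro z hz hsum hpow
    have hthis := congrArg (fun q => (Polynomial.map φ q).eval z) hdiv
    simp only [Polynomial.map_add, Polynomial.map_mul, eval_add, eval_mul] at hthis
    rw [hfroot z hpow, hgroot z hz hsum] at hthis
    simpa using hthis.symm
  have h1 := hrmap (ζ ^ i) hz0 rfl hzl
  have h2 := hrmap ((ζ ^ i)⁻¹) (inv_ne_zero hz0) hzinv_sum hzinv_l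
  have hrdeg' : (r.map φ).natDegree ≤ 1 := natDegree_map_le.trans hrdeg
  have hrc := eq_X_add_C_of_natDegree_le_one hrdeg'
  rw [hrc] at h1 h2
  simp only [eval_add, eval_mul, eval_C, eval_X] at h1 h2
  have hc1 : (r.map φ).coeff 1 = 0 := by
    by_contra hc1
    apply hzne
    have h3 : (r.map φ).coeff 1 * (ζ ^ i - (ζ ^ i)⁻¹) = 0 := by linear_combination h1 - h2
    rcases mul_eq_zero.mp h3 with h | h
    · exact absurd h hc1
    · exact sub_eq_zero.mp h
  have hc0 : (r.map φ).coeff 0 = 0 := by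
    rw [hc1, zero_mul, zero_add] at h1; exact h1
  have hr0 : r.map φ = 0 := by rw [hrc, hc1, hc0]; simp
  have hrzero : r = 0 := Polynomial.map_injective φ hφinj (by rw [hr0, Polynomial.map_zero])
  refine ⟨f /ₘ g, ?_⟩
  conv_lhs => rw [hdiv]
  rw [hrzero, zero_add]


lemma aux_quad_trick {E : Type*} [Field E] {u v : E} (hu : u ≠ 0) (hv : v ≠ 0)
    (h : u + u⁻¹ = v + v⁻¹) : u = v ∨ u = v⁻¹ := by
  have key : (u - v) * (u - v⁻¹) = 0 := by
    have e : (u - v) * (u - v⁻¹) = u ^ 2 - u * (v + v⁻¹) + v * v⁻¹ := by ring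
    rw [e, ← h, mul_inv_cancel₀ hv, mul_add, mul_inv_cancel₀ hu]
    ring
  rcases mul_eq_zero.mp key with h' | h'
  · exact Or.inl (sub_eq_zero.mp h')
  · exact Or.inr (sub_eq_zero.mp h')

lemma aux_main {R : Type*} [CommRing R] (p ℓ : ℕ) (hp : p.Prime) (hl : ℓ.Prime)
    (hpl : p ≠ ℓ) (P : Ideal R) (hP : P.IsPrime) (hpP : (p : R) ∈ P)
    (m : ℕ) (hm : 1 < m) [Fintype (R ⧸ P)] (hcard : Fintype.card (R ⧸ P) = p ^ m)
    (a a₁ : R) (hgen : Subring.closure {a₁} = (⊤ : Subring R))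
    (q q₁ : Polynomial R)
    (hq : (X ^ ℓ - 1 : Polynomial R) = (X ^ 2 - C a * X + 1) * q)
    (hq₁ : (X ^ ℓ - 1 : Polynomial R) = (X ^ 2 - C a₁ * X + 1) * q₁) :
    Subring.closure {Ideal.Quotient.mk P a} = ⊤ := by
  classical
  haveI := hP
  haveI : Fact ℓ.Prime := ⟨hl⟩
  haveI : Fact p.Prime := ⟨hp⟩
  letI : Field (R ⧸ P) := (Finite.isField_of_domain _).toField
  haveI : CharP (R ⧸ P) p := (CharP.charP_iff_prime_eq_zero hp).mpr (by
    rw [← map_natCast (Ideal.Quotient.mk P)]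
    exact Ideal.Quotient.eq_zero_iff_mem.mpr hpP)
  haveI : CharP (AlgebraicClosure (R ⧸ P)) p :=
    charP_of_injective_algebraMap (algebraMap (R ⧸ P) (AlgebraicClosure (R ⧸ P))).injective p
  -- existence of an ℓ-th root of unity realizing each quadratic
  have hex : ∀ (b : R) (qq : Polynomial R),
      (X ^ ℓ - 1 : Polynomial R) = (X ^ 2 - C b * X + 1) * qq →
      ∃ y : AlgebraicClosure (R ⧸ P), y ≠ 0 ∧ y ≠ 1 ∧ y ^ ℓ = 1 ∧
        algebraMap (R ⧸ P) (AlgebraicClosure (R ⧸ P)) (Ideal.Quotient.mk P b) = y + y⁻¹ := by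
    intro b qq hqq
    set ψ : R →+* AlgebraicClosure (R ⧸ P) :=
      (algebraMap (R ⧸ P) (AlgebraicClosure (R ⧸ P))).comp (Ideal.Quotient.mk P) with hψ
    have hmap := congrArg (Polynomial.map ψ) hqq
    simp only [Polynomial.map_sub, Polynomial.map_add, Polynomial.map_mul, Polynomial.map_pow,
      Polynomial.map_one, map_X, map_C] at hmap
    have hdeg : (X ^ 2 - C (ψ b) * X + 1 :
        Polynomial (AlgebraicClosure (R ⧸ P))).degree = 2 := by compute_degree!
    obtain ⟨y, hy⟩ := IsAlgClosed.exists_root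
      (X ^ 2 - C (ψ b) * X + 1 : Polynomial (AlgebraicClosure (R ⧸ P)))
      (by rw [hdeg]; exact two_ne_zero)
    have hyev : y ^ 2 - ψ b * y + 1 = 0 := by simpa [IsRoot] using hy
    have hy0 : y ≠ 0 := by
      intro h; rw [h] at hyev; simp at hyev
    have hyl : y ^ ℓ = 1 := by
      have hev := congrArg (Polynomial.eval y) hmap
      simp only [eval_sub, eval_add, eval_mul, eval_pow, eval_one, eval_X, eval_C] at hev
      rw [hyev, zero_mul] at hev
      have := sub_eq_zero.mp hev
      exact this
    have hyb : algebraMap (R ⧸ P) (AlgebraicClosure (R ⧸ P)) (Ideal.Quotient.mk P b)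
        = y + y⁻¹ := by
      have h2 : ψ b * y = (y + y⁻¹) * y := by
        rw [add_mul, inv_mul_cancel₀ hy0]
        linear_combination -hyev
      exact mul_right_cancel₀ hy0 h2
    have hy1 : y ≠ 1 := by
      intro h1
      have hb2 : ψ b = 2 := by
        rw [h1] at hyev
        have : ψ b = 1 + 1 := by linear_combination -hyev
        rw [this]; norm_num
      rw [hb2] at hmap
      have hfac : (X ^ 2 - C (2 : AlgebraicClosure (R ⧸ P)) * X + 1) = (X - 1) ^ 2 := by
        simp only [map_ofNat]
        ring
      rw [hfac] at hmap
      have hder := congrArg (fun f => Polynomial.eval 1 (Polynomial.derivative f)) hmap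
      simp only [derivative_sub, derivative_one, derivative_X_pow, derivative_mul,
        derivative_pow, derivative_X, eval_sub, eval_add, eval_mul, eval_pow, eval_one,
        eval_X, eval_natCast, eval_C, sub_zero, mul_one] at hder
      simp at hder
      -- hder : (ℓ : AlgebraicClosure (R ⧸ P)) = 0
      have hdvd := (CharP.cast_eq_zero_iff (AlgebraicClosure (R ⧸ P)) p ℓ).mp hder
      rcases (Nat.Prime.eq_one_or_self_of_dvd hl p hdvd) with h | h
      · exact hp.one_lt.ne' h
      · exact hpl h
    exact ⟨y, hy0, hy1, hyl, hyb⟩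
  obtain ⟨y, hy0, hy1, hyl, hyb⟩ := hex a q hq
  obtain ⟨y₁, hy10, hy11, hy1l, hy1b⟩ := hex a₁ q₁ hq₁
  have hordy : orderOf y = ℓ := orderOf_eq_prime hyl hy1
  have hordy₁ : orderOf y₁ = ℓ := orderOf_eq_prime hy1l hy11
  -- the subring generated by the residue of a
  letI : Fintype ↥(Subring.closure {Ideal.Quotient.mk P a}) := Fintype.ofFinite _
  letI : Field ↥(Subring.closure {Ideal.Quotient.mk P a}) :=
    (Finite.isField_of_domain _).toField
  obtain ⟨e, -, hScard⟩ := FiniteField.card ↥(Subring.closure {Ideal.Quotient.mk P a}) p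
  have hmem : Ideal.Quotient.mk P a ∈ Subring.closure {Ideal.Quotient.mk P a} :=
    Subring.subset_closure rfl
  have hbe : (Ideal.Quotient.mk P a) ^ (p ^ (e : ℕ)) = Ideal.Quotient.mk P a := by
    have h := FiniteField.pow_card (⟨_, hmem⟩ : ↥(Subring.closure {Ideal.Quotient.mk P a}))
    rw [hScard] at h
    have h2 := congrArg (fun x : ↥(Subring.closure {Ideal.Quotient.mk P a}) => (x : R ⧸ P)) h
    simpa using h2
  have hN1 : 1 ≤ p ^ (e : ℕ) := Nat.one_le_pow _ _ hp.pos
  -- transfer to the algebraic closure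
  have hbE : (y + y⁻¹) ^ (p ^ (e : ℕ)) = y + y⁻¹ := by
    rw [← hyb, ← map_pow, hbe]
  rw [add_pow_char_pow, inv_pow] at hbE
  have hcases := aux_quad_trick (pow_ne_zero _ hy0) hy0 hbE
  have hb1E : (y₁ + y₁⁻¹) ^ (p ^ (e : ℕ)) = y₁ + y₁⁻¹ := by
    rw [add_pow_char_pow, inv_pow]
    rcases hcases with hcase | hcase
    · -- y ^ N = y : ℓ ∣ N - 1
      have h1 : y ^ (p ^ (e : ℕ) - 1) * y = y := by
        rw [← pow_succ, Nat.sub_add_cancel hN1, hcase]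
      have h2 : y ^ (p ^ (e : ℕ) - 1) = 1 :=
        mul_right_cancel₀ hy0 (h1.trans (one_mul y).symm)
      have hdvd : ℓ ∣ p ^ (e : ℕ) - 1 := hordy ▸ orderOf_dvd_of_pow_eq_one h2
      have h3 : y₁ ^ (p ^ (e : ℕ) - 1) = 1 :=
        orderOf_dvd_iff_pow_eq_one.mp (hordy₁ ▸ hdvd)
      have h4 : y₁ ^ (p ^ (e : ℕ)) = y₁ := by
        rw [← Nat.sub_add_cancel hN1, pow_succ, h3, one_mul]
      rw [h4]
    · -- y ^ N = y⁻¹ : ℓ ∣ N + 1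
      have h1 : y ^ (p ^ (e : ℕ) + 1) = 1 := by
        rw [pow_succ, hcase, inv_mul_cancel₀ hy0]
      have hdvd : ℓ ∣ p ^ (e : ℕ) + 1 := hordy ▸ orderOf_dvd_of_pow_eq_one h1
      have h3 : y₁ ^ (p ^ (e : ℕ) + 1) = 1 :=
        orderOf_dvd_iff_pow_eq_one.mp (hordy₁ ▸ hdvd)
      have h4 : y₁ ^ (p ^ (e : ℕ)) = y₁⁻¹ := by
        have := h3
        rw [pow_succ] at this
        exact eq_inv_of_mul_eq_one_left this
      rw [h4, inv_inv, add_comm]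
  -- the residue of a₁ is fixed by the e-th Frobenius iterate
  have hb1 : (Ideal.Quotient.mk P a₁) ^ (p ^ (e : ℕ)) = Ideal.Quotient.mk P a₁ := by
    apply (algebraMap (R ⧸ P) (AlgebraicClosure (R ⧸ P))).injective
    rw [map_pow, hy1b, hb1E]
  -- hence every element of the residue field is fixed
  haveI : ExpChar (R ⧸ P) p := ExpChar.prime hp
  have hall : ∀ x : R ⧸ P, x ^ (p ^ (e : ℕ)) = x := by
    have htop : Subring.closure {Ideal.Quotient.mk P a₁} = (⊤ : Subring (R ⧸ P)) := by
      have h1 : Subring.closure ({Ideal.Quotient.mk P a₁} : Set (R ⧸ P)) =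
          (Subring.closure {a₁}).map (Ideal.Quotient.mk P) := by
        rw [RingHom.map_closure, Set.image_singleton]
      rw [h1, hgen]
      rw [eq_top_iff]
      rintro x -
      obtain ⟨r, rfl⟩ := Ideal.Quotient.mk_surjective x
      exact ⟨r, Subring.mem_top r, rfl⟩
    intro x
    have hle : Subring.closure {Ideal.Quotient.mk P a₁} ≤
        RingHom.eqLocus (iterateFrobenius (R ⧸ P) p (e : ℕ)) (RingHom.id _) := by
      apply Subring.closure_le.mpr
      intro z hz
      rcases hz with rfl
      show iterateFrobenius (R ⧸ P) p (e : ℕ) _ = _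
      rw [iterateFrobenius_def, hb1]
      rfl
    rw [htop] at hle
    have := hle (Subring.mem_top x)
    have h2 : iterateFrobenius (R ⧸ P) p (e : ℕ) x = x := this
    rwa [iterateFrobenius_def] at h2
  -- cardinality comparison : m ≤ e
  have hmle : m ≤ (e : ℕ) := by
    have hmon : (X ^ (p ^ (e : ℕ)) - X : Polynomial (R ⧸ P)).Monic := by
      have h2 : 2 ≤ p ^ (e : ℕ) := by
        calc 2 ≤ p := hp.two_le
        _ = p ^ 1 := (pow_one p).symm
        _ ≤ p ^ (e : ℕ) := Nat.pow_le_pow_right hp.pos e.2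
      apply monic_X_pow_sub
      rw [degree_X]
      exact_mod_cast (by omega : 1 < p ^ (e : ℕ))
    have hne : (X ^ (p ^ (e : ℕ)) - X : Polynomial (R ⧸ P)) ≠ 0 := hmon.ne_zero
    have hsub : (Finset.univ : Finset (R ⧸ P)) ⊆
        (X ^ (p ^ (e : ℕ)) - X : Polynomial (R ⧸ P)).roots.toFinset := by
      intro x _
      rw [Multiset.mem_toFinset, mem_roots hne]
      simp [IsRoot, hall x]
    have hcle : Fintype.card (R ⧸ P) ≤ p ^ (e : ℕ) := by
      calc Fintype.card (R ⧸ P) = (Finset.univ : Finset (R ⧸ P)).card := rfl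
      _ ≤ (X ^ (p ^ (e : ℕ)) - X : Polynomial (R ⧸ P)).roots.toFinset.card :=
          Finset.card_le_card hsub
      _ ≤ Multiset.card (X ^ (p ^ (e : ℕ)) - X : Polynomial (R ⧸ P)).roots :=
          Multiset.toFinset_card_le _
      _ ≤ (X ^ (p ^ (e : ℕ)) - X : Polynomial (R ⧸ P)).natDegree := card_roots' _
      _ ≤ p ^ (e : ℕ) := by
          apply le_trans (natDegree_sub_le _ _)
          simp only [natDegree_X_pow, natDegree_X]
          exact max_le le_rfl hN1
    rw [hcard] at hcle
    exact (Nat.pow_le_pow_iff_right hp.one_lt).mp hcle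
  -- cardinality comparison : e ≤ m
  have heme : (e : ℕ) ≤ m := by
    have hcardle : Fintype.card ↥(Subring.closure {Ideal.Quotient.mk P a}) ≤
        Fintype.card (R ⧸ P) := Fintype.card_le_of_injective _ Subtype.val_injective
    rw [hScard, hcard] at hcardle
    exact (Nat.pow_le_pow_iff_right hp.one_lt).mp hcardle
  have hem : (e : ℕ) = m := le_antisymm heme hmle
  have hcards : Fintype.card ↥(Subring.closure {Ideal.Quotient.mk P a}) =
      Fintype.card (R ⧸ P) := by rw [hScard, hcard, hem]
  have hsurj : Function.Surjective
      (fun s : ↥(Subring.closure {Ideal.Quotient.mk P a}) => (s : R ⧸ P)) :=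
    ((Fintype.bijective_iff_injective_and_card _).mpr ⟨Subtype.val_injective, hcards⟩).2
  rw [Subring.eq_top_iff']
  intro x
  obtain ⟨s, rfl⟩ := hsurj x
  exact s.2


theorem residue_generates (k : ℕ) (hk : 1 ≤ k) (hprime : (2 * k + 1).Prime)
    (ζ : ℂ) (hζ : IsPrimitiveRoot ζ (2 * k + 1))
    (p : ℕ) (hp : p.Prime) (hpl : p ≠ 2 * k + 1)
    (P : Ideal (Subring.closure {ζ + ζ⁻¹} : Subring ℂ)) (hP : P.IsPrime)
    (hpP : (p : (Subring.closure {ζ + ζ⁻¹} : Subring ℂ)) ∈ P)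
    (m : ℕ) (hm : 1 < m)
    [Fintype ((Subring.closure {ζ + ζ⁻¹} : Subring ℂ) ⧸ P)]
    (hcard : Fintype.card ((Subring.closure {ζ + ζ⁻¹} : Subring ℂ) ⧸ P) = p ^ m)
    (i : ℕ) (hi1 : 1 ≤ i) (hik : i ≤ k)
    (a : (Subring.closure {ζ + ζ⁻¹} : Subring ℂ)) (ha : (a : ℂ) = ζ ^ i + (ζ ^ i)⁻¹) :
    Subring.closure {Ideal.Quotient.mk P a} = ⊤ := by
  obtain ⟨q, hq⟩ := aux_div k i ζ hζ hi1 hik a ha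
  obtain ⟨q₁, hq₁⟩ := aux_div k 1 ζ hζ le_rfl hk
    ⟨ζ + ζ⁻¹, Subring.subset_closure rfl⟩ (by simp)
  exact aux_main p (2 * k + 1) hp hprime hpl P hP hpP m hm hcard a _
    (aux_closure_self_top (ζ + ζ⁻¹)) q q₁ hq hq₁
end
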